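/- Let P₀, P₁, …, P_m be a symmetric Clifford system on ℝ^{2l} and F(x) = |x|⁴ − 2∑_{i=0}^{m} ⟨P_i x, x⟩² the FKM polynomial. Then ⟨∇F(x), x⟩ = 4F(x) for every x ∈ ℝ^{2l}, and for every unit vector x ∈ S^{2l−1}(1) the squared norm of the component of ∇F(x) tangent to the sphere satisfies |∇F(x)|² − ⟨∇F(x), x⟩² = 16(1 − F(x)²). (Equivalently, the restriction f = F|_{S^{2l−1}(1)} satisfies the transnormal equation |∇^{S}f|² = 16(1 − f²) = g²(1 − f²) with g = 4.) -/

import Mathlib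

open RealInnerProductSpace

section
variable {l : ℕ}
local notation "E" => EuclideanSpace ℝ (Fin (2 * l))

lemma quad_deriv (T : E →ₗ[ℝ] E) (hT : T.IsSymmetric) (x : E) :
    HasFDerivAt (fun y : E => ⟪T y, y⟫) ((2 : ℝ) • (innerSL ℝ (T x))) x := by
  have h1 : HasFDerivAt (fun y : E => T y) (T.toContinuousLinearMap) x :=
    (T.toContinuousLinearMap).hasFDerivAt
  have h2 : HasFDerivAt (fun y : E => y) (ContinuousLinearMap.id ℝ E) x := hasFDerivAt_id x
  have h := h1.inner ℝ h2
  refine (h.congr_fderiv ?_)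
  symm
  ext v
  simp only [ContinuousLinearMap.smul_apply, innerSL_apply_apply, ContinuousLinearMap.comp_apply,
    ContinuousLinearMap.prod_apply, fderivInnerCLM_apply, LinearMap.coe_toContinuousLinearMap',
    ContinuousLinearMap.coe_id', id_eq]
  have : ⟪T v, x⟫ = ⟪T x, v⟫ := by rw [hT v x, real_inner_comm]
  rw [this, smul_eq_mul]; ring

lemma fkm_grad {m : ℕ} (P : Fin (m + 1) → (E →ₗ[ℝ] E)) (hsymm : ∀ i, (P i).IsSymmetric)
    (F : E → ℝ) (hF : ∀ x, F x = ‖x‖ ^ 4 - 2 * ∑ i, ⟪P i x, x⟫ ^ 2) (x : E) :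
    gradient F x = (4 * ‖x‖ ^ 2) • x - ∑ i, (8 * ⟪P i x, x⟫) • P i x := by
  have hId : (LinearMap.id : E →ₗ[ℝ] E).IsSymmetric := fun u v => rfl
  have hFeq : F = fun y : E =>
      ⟪(LinearMap.id : E →ₗ[ℝ] E) y, y⟫ * ⟪(LinearMap.id : E →ₗ[ℝ] E) y, y⟫ -
        2 * ∑ i, ⟪P i y, y⟫ * ⟪P i y, y⟫ := by
    funext y
    rw [hF y]
    simp only [LinearMap.id_coe, id_eq, real_inner_self_eq_norm_sq]
    have : ∀ i : Fin (m + 1), ⟪P i y, y⟫ ^ 2 = ⟪P i y, y⟫ * ⟪P i y, y⟫ := fun i => sq _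
    rw [Finset.sum_congr rfl fun i _ => this i]
    ring
  have hq0 := quad_deriv (LinearMap.id : E →ₗ[ℝ] E) hId x
  have h1 := hq0.fun_mul hq0
  have h2 := fun i => (quad_deriv (P i) (hsymm i) x).fun_mul (quad_deriv (P i) (hsymm i) x)
  have hsum := HasFDerivAt.fun_sum (fun i (_ : i ∈ Finset.univ) => h2 i)
  have htot := h1.fun_sub (hsum.const_mul (2 : ℝ))
  rw [← hFeq] at htot
  have hgrad : HasGradientAt F
      ((4 * ‖x‖ ^ 2) • x - ∑ i, (8 * ⟪P i x, x⟫) • P i x) x := by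
    rw [hasGradientAt_iff_hasFDerivAt]
    refine (htot.congr_fderiv ?_)
    symm
    ext v
    simp only [InnerProductSpace.toDual_apply_apply, inner_sub_left, inner_smul_left, sum_inner,
      ContinuousLinearMap.sub_apply, ContinuousLinearMap.smul_apply, ContinuousLinearMap.sum_apply,
      ContinuousLinearMap.add_apply, innerSL_apply_apply, smul_eq_mul, LinearMap.id_coe, id_eq,
      real_inner_self_eq_norm_sq, conj_trivial]
    rw [Finset.mul_sum]
    congr 1
    · ring
    · exact Finset.sum_congr rfl fun i _ => by ring
  exact hgrad.gradient
end

section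
variable {l : ℕ}
local notation "E" => EuclideanSpace ℝ (Fin (2 * l))

lemma key_orth {m : ℕ} (P : Fin (m + 1) → (E →ₗ[ℝ] E)) (hsymm : ∀ i, (P i).IsSymmetric)
    (hcliff : ∀ i j, P i ∘ₗ P j + P j ∘ₗ P i =
      if i = j then (2 : ℝ) • (LinearMap.id : E →ₗ[ℝ] E) else 0)
    (i j : Fin (m + 1)) (x : E) :
    ⟪P i x, P j x⟫ = if i = j then ‖x‖ ^ 2 else 0 := by
  have h := congrArg (fun T : E →ₗ[ℝ] E => ⟪x, T x⟫) (hcliff i j)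
  simp only [LinearMap.add_apply, LinearMap.comp_apply, inner_add_right] at h
  have e1 : ⟪x, P i (P j x)⟫ = ⟪P i x, P j x⟫ := ((hsymm i) x (P j x)).symm
  have e2 : ⟪x, P j (P i x)⟫ = ⟪P i x, P j x⟫ := by
    rw [← (hsymm j) x (P i x)]; exact real_inner_comm _ _
  rw [e1, e2] at h
  by_cases hij : i = j
  · simp only [hij, if_true] at h ⊢
    simp only [LinearMap.smul_apply, LinearMap.id_apply, inner_smul_right,
      real_inner_self_eq_norm_sq] at h
    rw [real_inner_self_eq_norm_sq]
    linarith
  · simp only [hij, if_false] at h ⊢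
    simp only [LinearMap.zero_apply, inner_zero_right] at h
    linarith
end

/-- The FKM polynomial satisfies `⟪∇F(x), x⟫ = 4 F(x)` (Euler's identity for
degree `4`), and for every unit vector `x` the squared norm of the spherical
(tangential) part of `∇F(x)` is `|∇F(x)|² - ⟪∇F(x), x⟫² = 16 (1 - F(x)²)`;
i.e. the restriction `f = F|_{S^{2l-1}}` is transnormal with `|∇ˢf|² = 16(1 - f²)`. -/
theorem fkm_transnormal {l m : ℕ}
    (P : Fin (m + 1) →
      (EuclideanSpace ℝ (Fin (2 * l)) →ₗ[ℝ] EuclideanSpace ℝ (Fin (2 * l))))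
    (hsymm : ∀ i, (P i).IsSymmetric)
    (hcliff : ∀ i j, P i ∘ₗ P j + P j ∘ₗ P i =
      if i = j then (2 : ℝ) • (LinearMap.id :
        EuclideanSpace ℝ (Fin (2 * l)) →ₗ[ℝ] EuclideanSpace ℝ (Fin (2 * l))) else 0)
    (F : EuclideanSpace ℝ (Fin (2 * l)) → ℝ)
    (hF : ∀ x, F x = ‖x‖ ^ 4 - 2 * ∑ i, ⟪P i x, x⟫ ^ 2) :
    (∀ x, ⟪gradient F x, x⟫ = 4 * F x) ∧
      (∀ x : EuclideanSpace ℝ (Fin (2 * l)), ‖x‖ = 1 →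
        ‖gradient F x‖ ^ 2 - ⟪gradient F x, x⟫ ^ 2 = 16 * (1 - F x ^ 2)) := by
  have hgrad := fkm_grad P hsymm F hF
  have part1 : ∀ x, ⟪gradient F x, x⟫ = 4 * F x := by
    intro x
    rw [hgrad x, hF x]
    simp only [inner_sub_left, inner_smul_left, sum_inner, real_inner_self_eq_norm_sq,
      conj_trivial]
    rw [Finset.mul_sum]
    have : ∀ i : Fin (m + 1), 8 * ⟪P i x, x⟫ * ⟪P i x, x⟫ = 4 * (2 * ⟪P i x, x⟫ ^ 2) :=
      fun i => by ring
    rw [Finset.sum_congr rfl fun i _ => this i, ← Finset.mul_sum, ← Finset.mul_sum]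
    ring
  refine ⟨part1, fun x hx => ?_⟩
  have hnorm : ‖gradient F x‖ ^ 2 = 16 := by
    rw [← real_inner_self_eq_norm_sq, hgrad x]
    simp only [inner_sub_left, inner_sub_right, inner_smul_left, inner_smul_right, sum_inner,
      inner_sum, real_inner_self_eq_norm_sq, conj_trivial, hx, one_pow, mul_one]
    have hdiag : ∀ i : Fin (m + 1),
        ∑ j, 8 * ⟪P j x, x⟫ * ⟪P j x, P i x⟫ = 8 * ⟪P i x, x⟫ := by
      intro i
      have : ∀ j : Fin (m + 1), 8 * ⟪P j x, x⟫ * ⟪P j x, P i x⟫ =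
          if j = i then 8 * ⟪P i x, x⟫ else 0 := by
        intro j
        rw [key_orth P hsymm hcliff j i x, hx]
        by_cases h : j = i <;> simp [h]
      rw [Finset.sum_congr rfl fun j _ => this j, Finset.sum_ite_eq' Finset.univ i]
      simp
    have hxP : ∀ i : Fin (m + 1), ⟪x, P i x⟫ = ⟪P i x, x⟫ := fun i => real_inner_comm _ _
    simp only [hxP, hdiag]
    have e : ∑ i : Fin (m + 1), 8 * ⟪P i x, x⟫ * (4 * ⟪P i x, x⟫ - 8 * ⟪P i x, x⟫) =
        (-4) * ∑ i : Fin (m + 1), 8 * ⟪P i x, x⟫ * ⟪P i x, x⟫ := by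
      rw [Finset.mul_sum]; exact Finset.sum_congr rfl fun i _ => by ring
    rw [e]
    ring
  rw [hnorm, part1 x]
  ring
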